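/- Let λ, μ > 0, C_F ≥ 0, ζ ≥ 1/2, ρ₁ ≥ 1, and ε, ρ₂ ≥ 1 with 1 − 1/ε − 1/ρ₂ ≥ 0, and β₁, β₂ > 0 be real numbers; let X₁, X₂, S₁, S₂, W₁, W₂, r, q, d, P ≥ 0 be nonnegative reals and J a real number. If λX₁² + μX₂² + (1/2)( μ(1 − 1/ρ₂)S₂ + λ(1 − 1/ρ₁)S₁ ) ≤ (ρ₁/2)W₁ + (ρ₂/2)W₂ + (μ/2)(S₂/ε + ε d²) + (λ(r + C_F q) + μP)X₁ + μ q X₂ + J, then (2 − 1/ζ)(λX₁² + μX₂²) + μ(1 − 1/ε − 1/ρ₂)S₂ + λ(1 − 1/ρ₁)S₁ ≤ ρ₁W₁ + ρ₂W₂ + ε μ d² + 2J + ζ·[ λ( (1+β₁)((1+β₂)r² + (1 + 1/β₂)C_F² q²) + (1 + 1/β₁)(μ²/λ²)P² ) + μ q² ]. -/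

import Mathlib

theorem stmt_9 (lam mu C_F ζ ρ₁ ρ₂ ε β₁ β₂ X₁ X₂ S₁ S₂ W₁ W₂ r q d P J : ℝ)
    (hlam : 0 < lam) (hmu : 0 < mu) (hCF : 0 ≤ C_F) (hζ : 1 / 2 ≤ ζ)
    (hρ₁ : 1 ≤ ρ₁) (hρ₂ : 1 ≤ ρ₂) (hε : 1 ≤ ε)
    (hερ : 0 ≤ 1 - 1 / ε - 1 / ρ₂)
    (hβ₁ : 0 < β₁) (hβ₂ : 0 < β₂)
    (hX₁ : 0 ≤ X₁) (hX₂ : 0 ≤ X₂) (hS₁ : 0 ≤ S₁) (hS₂ : 0 ≤ S₂)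
    (hW₁ : 0 ≤ W₁) (hW₂ : 0 ≤ W₂) (hr : 0 ≤ r) (hq : 0 ≤ q)
    (hd : 0 ≤ d) (hP : 0 ≤ P)
    (h : lam * X₁ ^ 2 + mu * X₂ ^ 2
        + (1 / 2) * (mu * (1 - 1 / ρ₂) * S₂ + lam * (1 - 1 / ρ₁) * S₁)
      ≤ (ρ₁ / 2) * W₁ + (ρ₂ / 2) * W₂ + (mu / 2) * (S₂ / ε + ε * d ^ 2)
        + (lam * (r + C_F * q) + mu * P) * X₁ + mu * q * X₂ + J) :
    (2 - 1 / ζ) * (lam * X₁ ^ 2 + mu * X₂ ^ 2)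
        + mu * (1 - 1 / ε - 1 / ρ₂) * S₂ + lam * (1 - 1 / ρ₁) * S₁
      ≤ ρ₁ * W₁ + ρ₂ * W₂ + ε * mu * d ^ 2 + 2 * J
        + ζ * (lam * ((1 + β₁) * ((1 + β₂) * r ^ 2 + (1 + 1 / β₂) * C_F ^ 2 * q ^ 2)
                 + (1 + 1 / β₁) * (mu ^ 2 / lam ^ 2) * P ^ 2)
             + mu * q ^ 2) := by
  have hζ0 : 0 < ζ := lt_of_lt_of_le (by norm_num) hζ
  set a : ℝ := lam * (r + C_F * q) + mu * P with ha
  have ha0 : 0 ≤ a := by positivity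
  set big : ℝ := (1 + β₁) * ((1 + β₂) * r ^ 2 + (1 + 1 / β₂) * C_F ^ 2 * q ^ 2)
      + (1 + 1 / β₁) * (mu ^ 2 / lam ^ 2) * P ^ 2 with hbig
  -- Young's inequality twice: a^2 ≤ lam^2 * big
  have hy2 : (r + C_F * q) ^ 2 ≤ (1 + β₂) * r ^ 2 + (1 + 1 / β₂) * C_F ^ 2 * q ^ 2 := by
    rw [← sub_nonneg]
    have h1 : (1 + β₂) * r ^ 2 + (1 + 1 / β₂) * C_F ^ 2 * q ^ 2 - (r + C_F * q) ^ 2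
        = (β₂ * r - C_F * q) ^ 2 / β₂ := by field_simp; ring
    rw [h1]; positivity
  have hy1 : a ^ 2 ≤ (1 + β₁) * (lam * (r + C_F * q)) ^ 2 + (1 + 1 / β₁) * (mu * P) ^ 2 := by
    rw [← sub_nonneg, ha]
    have h1 : (1 + β₁) * (lam * (r + C_F * q)) ^ 2 + (1 + 1 / β₁) * (mu * P) ^ 2
        - (lam * (r + C_F * q) + mu * P) ^ 2
        = (β₁ * (lam * (r + C_F * q)) - mu * P) ^ 2 / β₁ := by field_simp; ring
    rw [h1]; positivity
  have habig : a ^ 2 ≤ lam ^ 2 * big := by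
    have hb : lam ^ 2 * big = (1 + β₁) * (lam ^ 2 * ((1 + β₂) * r ^ 2 + (1 + 1 / β₂) * C_F ^ 2 * q ^ 2))
        + (1 + 1 / β₁) * (mu * P) ^ 2 := by
      rw [hbig]; field_simp
    rw [hb]
    have hstep := mul_le_mul_of_nonneg_left hy2 (sq_nonneg lam)
    have hβ₁' : (0:ℝ) ≤ 1 + β₁ := by linarith
    have hstep2 := mul_le_mul_of_nonneg_left hstep hβ₁'
    calc a ^ 2 ≤ (1 + β₁) * (lam * (r + C_F * q)) ^ 2 + (1 + 1 / β₁) * (mu * P) ^ 2 := hy1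
      _ = (1 + β₁) * (lam ^ 2 * (r + C_F * q) ^ 2) + (1 + 1 / β₁) * (mu * P) ^ 2 := by ring
      _ ≤ (1 + β₁) * (lam ^ 2 * ((1 + β₂) * r ^ 2 + (1 + 1 / β₂) * C_F ^ 2 * q ^ 2))
          + (1 + 1 / β₁) * (mu * P) ^ 2 := by linarith [hstep2]
  -- AM-GM on linear terms
  have h2 : 2 * (a * X₁) ≤ (1 / ζ) * (lam * X₁ ^ 2) + ζ * (lam * big) := by
    have key : 2 * (a * X₁) ≤ (1 / ζ) * (lam * X₁ ^ 2) + ζ * (a ^ 2 / lam) := by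
      rw [← sub_nonneg]
      have h1 : (1 / ζ) * (lam * X₁ ^ 2) + ζ * (a ^ 2 / lam) - 2 * (a * X₁)
          = (lam * X₁ - ζ * a) ^ 2 / (ζ * lam) := by field_simp; ring
      rw [h1]; positivity
    refine key.trans (add_le_add_right ?_ _)
    have hdiv : a ^ 2 / lam ≤ lam * big := by
      rw [div_le_iff₀ hlam]
      calc a ^ 2 ≤ lam ^ 2 * big := habig
        _ = lam * big * lam := by ring
    exact mul_le_mul_of_nonneg_left hdiv hζ0.le
  have h3 : 2 * (mu * q * X₂) ≤ (1 / ζ) * (mu * X₂ ^ 2) + ζ * (mu * q ^ 2) := by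
    rw [← sub_nonneg]
    have h1 : (1 / ζ) * (mu * X₂ ^ 2) + ζ * (mu * q ^ 2) - 2 * (mu * q * X₂)
        = mu * (X₂ - ζ * q) ^ 2 / ζ := by field_simp; ring
    rw [h1]; positivity
  clear_value a big
  simp only [one_div, div_eq_mul_inv] at h h2 h3 ⊢
  generalize ζ⁻¹ = iζ at h2 h3 ⊢
  generalize ε⁻¹ = iε at h ⊢
  generalize ρ₁⁻¹ = i1 at h ⊢
  generalize ρ₂⁻¹ = i2 at h ⊢
  linarith [h, h2, h3]
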